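/- arXiv:2309.11882 — 2 statements merged into one kernel-verified Lean document; each statement's English description precedes it below -/
import Mathlib

section
/- Let N : (0, ∞) → ℝ be differentiable and suppose that for all τ > 0, (d/dτ)(τ N(τ)) = W(τ) where W(τ) ≥ −τ A + N(τ) − n/2 for constants A > 0 and n > 0. Then for all 0 < τ₁ ≤ τ₂, N(τ₂) ≥ N(τ₁) − ((τ₂ − τ₁) A + (n/2) log(τ₂/τ₁)). -/
/-- Lemma 4.2 (quantitative lower-monotonicity of the pointed Nash entropy):
(τN)' = W with W ≥ -τA + N - n/2 implies
N(τ₂) ≥ N(τ₁) - ((τ₂-τ₁)A + (n/2) log(τ₂/τ₁)). -/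
theorem stmt_5 (n A : ℝ) (hn : 0 < n) (hA : 0 < A) (N W : ℝ → ℝ)
    (hder : ∀ τ > (0:ℝ), HasDerivAt (fun s => s * N s) (W τ) τ)
    (hW : ∀ τ > (0:ℝ), -τ * A + N τ - n / 2 ≤ W τ) :
    ∀ τ₁ τ₂ : ℝ, 0 < τ₁ → τ₁ ≤ τ₂ →
      N τ₁ - ((τ₂ - τ₁) * A + n / 2 * Real.log (τ₂ / τ₁)) ≤ N τ₂ := by
  -- N has derivative (W τ - N τ)/τ at τ > 0
  have hN : ∀ τ > (0:ℝ), HasDerivAt N ((W τ - N τ) / τ) τ := by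
    intro τ hτ
    have h1 : HasDerivAt (fun s => (s * N s) / s)
        ((W τ * τ - (τ * N τ) * 1) / τ ^ 2) τ :=
      (hder τ hτ).div (hasDerivAt_id τ) (ne_of_gt hτ)
    have heq : (fun s => (s * N s) / s) =ᶠ[nhds τ] N := by
      filter_upwards [eventually_ne_nhds hτ.ne'] with s hs
      field_simp
    have h2 : HasDerivAt N ((W τ * τ - (τ * N τ) * 1) / τ ^ 2) τ :=
      h1.congr_of_eventuallyEq heq.symm
    convert h2 using 1
    field_simp
  set F : ℝ → ℝ := fun s => N s + A * s + n / 2 * Real.log s with hFdef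
  have hF : ∀ τ > (0:ℝ), HasDerivAt F ((W τ - N τ) / τ + A + n / 2 * τ⁻¹) τ := by
    intro τ hτ
    have h1 : HasDerivAt (fun s : ℝ => A * s) (A * 1) τ := (hasDerivAt_id τ).const_mul A
    have h2 : HasDerivAt (fun s : ℝ => n / 2 * Real.log s) (n / 2 * τ⁻¹) τ :=
      (Real.hasDerivAt_log hτ.ne').const_mul (n / 2)
    have := ((hN τ hτ).add h1).add h2
    simp only [mul_one] at this
    exact this
  intro τ₁ τ₂ h1 h12
  have hsub : Set.Icc τ₁ τ₂ ⊆ Set.Ioi (0:ℝ) := fun x hx => lt_of_lt_of_le h1 hx.1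
  have hcont : ContinuousOn F (Set.Icc τ₁ τ₂) := fun x hx =>
    ((hF x (hsub hx)).continuousAt).continuousWithinAt
  have hdiff : DifferentiableOn ℝ F (interior (Set.Icc τ₁ τ₂)) := by
    intro x hx
    rw [interior_Icc] at hx
    exact ((hF x (lt_of_lt_of_le h1 hx.1.le)).differentiableAt).differentiableWithinAt
  have hderiv : ∀ x ∈ interior (Set.Icc τ₁ τ₂), 0 ≤ deriv F x := by
    intro x hx
    rw [interior_Icc] at hx
    have hx0 : 0 < x := lt_of_lt_of_le h1 hx.1.le
    rw [(hF x hx0).deriv]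
    have key := hW x hx0
    have heq : (W x - N x) / x + A + n / 2 * x⁻¹ = (W x - N x + x * A + n / 2) / x := by
      field_simp
    rw [heq]
    apply div_nonneg _ hx0.le
    linarith
  have hmono : MonotoneOn F (Set.Icc τ₁ τ₂) :=
    monotoneOn_of_deriv_nonneg (convex_Icc τ₁ τ₂) hcont hdiff hderiv
  have hle : F τ₁ ≤ F τ₂ :=
    hmono (Set.left_mem_Icc.2 h12) (Set.right_mem_Icc.2 h12) h12
  have h2 : 0 < τ₂ := lt_of_lt_of_le h1 h12
  have hlog : Real.log (τ₂ / τ₁) = Real.log τ₂ - Real.log τ₁ :=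
    Real.log_div h2.ne' h1.ne'
  simp only [hFdef] at hle
  rw [hlog]
  nlinarith [hle]
end

section
/- Let N : (0, ∞) → ℝ be continuously differentiable, non-increasing, with (d/dτ)(τ N(τ)) =: W(τ) non-increasing in τ, N ≤ 0, and suppose N(δ⁻¹) ≥ N(δ) − δ for some δ ∈ (0, 1). Then for every ζ ∈ (δ, 1) and every τ ∈ [ζ, ζ⁻¹], W(τ) ≥ (δ⁻¹/(δ⁻¹ − ζ⁻¹)) (N(1) − δ); in particular, if additionally W(τ) ≤ N(τ) ≤ N(1) + δ for all τ ∈ [δ, δ⁻¹], then |W(τ) − N(1)| ≤ ζ for τ ∈ [ζ, ζ⁻¹] provided δ is sufficiently small depending on ζ and a lower bound N(1) ≥ −κ. -/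
/-- Entropy pinching (from the proof of Proposition 7.2, equation (7.8)):
N continuously differentiable, non-increasing, nonpositive on (0,∞), with
(d/dτ)(τN(τ)) = W(τ) non-increasing; almost constancy of N over [δ, δ⁻¹] forces
a lower bound on W over [ζ, ζ⁻¹], and (for δ small depending on ζ, κ) almost
constancy of W. -/
theorem stmt_6 (N W : ℝ → ℝ)
    (hC1 : ∀ τ > (0:ℝ), HasDerivAt (fun s => s * N s) (W τ) τ)
    (hWcont : ContinuousOn W (Set.Ioi 0))
    (hNmono : AntitoneOn N (Set.Ioi 0))
    (hWmono : AntitoneOn W (Set.Ioi 0))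
    (hNle : ∀ τ > (0:ℝ), N τ ≤ 0) :
    (∀ δ ∈ Set.Ioo (0:ℝ) 1, N δ⁻¹ ≥ N δ - δ →
      ∀ ζ ∈ Set.Ioo δ 1, ∀ τ ∈ Set.Icc ζ ζ⁻¹,
        (δ⁻¹ / (δ⁻¹ - ζ⁻¹)) * (N 1 - δ) ≤ W τ) ∧
    (∀ κ > (0:ℝ), ∀ ζ ∈ Set.Ioo (0:ℝ) 1, ∃ δ₀ > (0:ℝ),
      ∀ δ ∈ Set.Ioo (0:ℝ) 1, δ ≤ δ₀ →
        N δ⁻¹ ≥ N δ - δ → N 1 ≥ -κ →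
        (∀ τ ∈ Set.Icc δ δ⁻¹, W τ ≤ N τ ∧ N τ ≤ N 1 + δ) →
        ∀ τ ∈ Set.Icc ζ ζ⁻¹, |W τ - N 1| ≤ ζ) := by
  -- Key mean-value estimate: for 0 < a ≤ b, b·N(b) − a·N(a) ≤ W(a)·(b − a).
  have key : ∀ a b : ℝ, 0 < a → a ≤ b → b * N b - a * N a ≤ W a * (b - a) := by
    intro a b ha hab
    set g : ℝ → ℝ := fun s => W a * s - s * N s with hg
    have hderiv : ∀ x ∈ Set.Icc a b, HasDerivAt g (W a - W x) x := by
      intro x hx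
      have hx0 : (0:ℝ) < x := lt_of_lt_of_le ha hx.1
      have h1 : HasDerivAt (fun s : ℝ => W a * s) (W a) x := by
        simpa using (hasDerivAt_id x).const_mul (W a)
      exact h1.sub (hC1 x hx0)
    have hmono : MonotoneOn g (Set.Icc a b) := by
      apply monotoneOn_of_deriv_nonneg (convex_Icc a b)
      · exact fun x hx => (hderiv x hx).continuousAt.continuousWithinAt
      · intro x hx
        rw [interior_Icc] at hx
        exact ((hderiv x (Set.mem_Icc_of_Ioo hx)).differentiableAt).differentiableWithinAt
      · intro x hx
        rw [interior_Icc] at hx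
        rw [(hderiv x (Set.mem_Icc_of_Ioo hx)).deriv]
        have hx0 : (0:ℝ) < x := lt_of_lt_of_le ha hx.1.le
        have : W x ≤ W a := hWmono (Set.mem_Ioi.2 ha) (Set.mem_Ioi.2 hx0) hx.1.le
        linarith
    have := hmono (Set.left_mem_Icc.2 hab) (Set.right_mem_Icc.2 hab) hab
    simp only [hg] at this
    linarith
  have part1 : ∀ δ ∈ Set.Ioo (0:ℝ) 1, N δ⁻¹ ≥ N δ - δ →
      ∀ ζ ∈ Set.Ioo δ 1, ∀ τ ∈ Set.Icc ζ ζ⁻¹,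
        (δ⁻¹ / (δ⁻¹ - ζ⁻¹)) * (N 1 - δ) ≤ W τ := by
    rintro δ ⟨hδ0, hδ1⟩ hpinch ζ ⟨hζδ, hζ1⟩ τ ⟨hτ1, hτ2⟩
    have hζ0 : 0 < ζ := hδ0.trans hζδ
    have hτ0 : 0 < τ := hζ0.trans_le hτ1
    have hζinv : 0 < ζ⁻¹ := by positivity
    have hδinv : 0 < δ⁻¹ := by positivity
    have hlt : ζ⁻¹ < δ⁻¹ := by
      exact inv_strictAnti₀ hδ0 hζδ
    have hWτ : W ζ⁻¹ ≤ W τ := hWmono (Set.mem_Ioi.2 hτ0) (Set.mem_Ioi.2 hζinv) hτ2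
    have hk := key ζ⁻¹ δ⁻¹ hζinv hlt.le
    have hN1 : N 1 - δ ≤ N δ⁻¹ := by
      have : N 1 ≤ N δ := hNmono (Set.mem_Ioi.2 hδ0) (Set.mem_Ioi.2 one_pos) hδ1.le
      linarith
    have hNζ : N ζ⁻¹ ≤ 0 := hNle _ hζinv
    have h2 : δ⁻¹ * (N 1 - δ) ≤ W ζ⁻¹ * (δ⁻¹ - ζ⁻¹) := by
      have ha := mul_le_mul_of_nonneg_left hN1 hδinv.le
      have hb : ζ⁻¹ * N ζ⁻¹ ≤ 0 := mul_nonpos_of_nonneg_of_nonpos hζinv.le hNζ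
      linarith
    rw [div_mul_eq_mul_div, div_le_iff₀ (by linarith)]
    nlinarith [mul_le_mul_of_nonneg_right hWτ (by linarith : (0:ℝ) ≤ δ⁻¹ - ζ⁻¹)]
  refine ⟨part1, ?_⟩
  rintro κ hκ ζ ⟨hζ0, hζ1⟩
  refine ⟨ζ^2 / (2*(κ+ζ)), by positivity, ?_⟩
  rintro δ ⟨hδ0, hδ1⟩ hδδ0 hpinch hN1κ hbound τ ⟨hτ1, hτ2⟩
  have hδζ : δ < ζ := by
    have h : ζ^2 / (2*(κ+ζ)) < ζ := by
      rw [div_lt_iff₀ (by positivity)]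
      nlinarith
    linarith
  have hτ0 : 0 < τ := hζ0.trans_le hτ1
  have hζinv0 : 0 < ζ⁻¹ := by positivity
  have hδinv0 : 0 < δ⁻¹ := by positivity
  have hinvle : ζ⁻¹ ≤ δ⁻¹ := inv_anti₀ hδ0 hδζ.le
  have hlt : ζ⁻¹ < δ⁻¹ := inv_strictAnti₀ hδ0 hδζ
  have hlow := part1 δ ⟨hδ0, hδ1⟩ hpinch ζ ⟨hδζ, hζ1⟩ τ ⟨hτ1, hτ2⟩
  obtain ⟨hWN, hNN1⟩ := hbound τ ⟨le_trans hδζ.le hτ1, le_trans hτ2 hinvle⟩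
  have hrw : δ⁻¹ / (δ⁻¹ - ζ⁻¹) = ζ / (ζ - δ) := by
    rw [div_eq_div_iff (sub_pos.2 hlt).ne' (sub_pos.2 hδζ).ne']
    field_simp [hδ0.ne', hζ0.ne']
  rw [hrw] at hlow
  have hδκ : δ * (2*(κ+ζ)) ≤ ζ^2 := (le_div_iff₀ (by positivity)).1 hδδ0
  have hδN1 : δ * (-κ) ≤ δ * N 1 := mul_le_mul_of_nonneg_left hN1κ hδ0.le
  have hlower : N 1 - ζ ≤ ζ / (ζ - δ) * (N 1 - δ) := by
    rw [div_mul_eq_mul_div, le_div_iff₀ (by linarith : (0:ℝ) < ζ - δ)]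
    nlinarith
  rw [abs_le]
  constructor
  · linarith
  · linarith
end
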